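/- Let N ≥ 1 and let p_1,...,p_{N+1}, q_1,...,q_{N+1}, c_1,...,c_{N+1} be reals satisfying 0 ≤ p_1 ≤ ... ≤ p_{N+1}, 0 ≤ q_1 ≤ ... ≤ q_{N+1}, and 0 ≤ p_1 − q_1 ≤ ... ≤ p_{N+1} − q_{N+1}. Let k, l ≥ 0 and set s_j(n,i) = p_j·n − q_j·i + c_j and r_j = k·p_j + l·q_j. Define f̃^n_i as the ultradiscrete permanent of the N×N matrix whose (j,m) entry (m = 1,...,N) is |s_j(n,i) + (−N−1+2m)·r_j/2|, and define g̃^n_i as the ultradiscrete permanent of the (N+1)×(N+1) matrix whose (j,m) entry (m = 1,...,N+1) is |s_j(n,i) + (−N−3+2m)·r_j/2|. Let α, β be reals with 0 ≤ α ≤ k and −k−l+α ≤ β ≤ α, and set A = (k−α)·p_{N+1} + (l+β)·q_{N+1} and B = α·p_{N+1} − β·q_{N+1}. Then for all real n, i: f̃^n_i + g̃^{n+α}_{i+β} = max( f̃^{n+α}_{i+β} + g̃^n_i − B, f̃^{n−k+α}_{i+l+β} + g̃^{n+k}_{i−l} − A ). -/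

import Mathlib

open Finset

/-- The ultradiscrete permanent of an `M × M` real matrix:
the maximum over all permutations `π` of `Σ_j a j (π j)`. -/
noncomputable def uperm (M : ℕ) (a : Fin M → Fin M → ℝ) : ℝ :=
  Finset.univ.sup' Finset.univ_nonempty fun π : Equiv.Perm (Fin M) => ∑ j, a j (π j)


section
variable (m : ℕ)

lemma succAbove_val_cases (e : Fin (m+1)) (mm : Fin m) :
    ((e.succAbove mm : Fin (m+1)) : ℕ) = (mm:ℕ) ∨ ((e.succAbove mm : Fin (m+1)) : ℕ) = (mm:ℕ)+1 := by
  rcases Fin.lt_or_le mm.castSucc e with h | h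
  · left; rw [Fin.succAbove_of_castSucc_lt _ _ h, Fin.coe_castSucc]
  · right; rw [Fin.succAbove_of_le_castSucc _ _ h, Fin.val_succ]

lemma sum_succAbove_real (e : Fin (m+1)) :
    ∑ mm : Fin m, (((e.succAbove mm : Fin (m+1)) : ℕ) : ℝ)
      = (∑ mm : Fin m, ((mm:ℕ) : ℝ)) + (m:ℝ) - ((e:ℕ) : ℝ) := by
  have h1 := Fin.sum_univ_succAbove (fun i : Fin (m+1) => ((i : ℕ) : ℝ)) e
  have h2 := Fin.sum_univ_castSucc (fun i : Fin (m+1) => ((i : ℕ) : ℝ))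
  simp only [Fin.coe_castSucc, Fin.val_last] at h2
  -- h1 : ∑ i : Fin (m+1), i = e + ∑ mm, succAbove
  -- h2 : ∑ i : Fin (m+1), i = ∑ mm : Fin m, mm + m
  rw [h2] at h1
  linarith
end


lemma le_uperm (M : ℕ) (a : Fin M → Fin M → ℝ) (π : Equiv.Perm (Fin M)) :
    (∑ j, a j (π j)) ≤ uperm M a :=
  Finset.le_sup' (fun π : Equiv.Perm (Fin M) => ∑ j, a j (π j)) (Finset.mem_univ π)

lemma uperm_le (M : ℕ) (a : Fin M → Fin M → ℝ) {c : ℝ}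
    (h : ∀ π : Equiv.Perm (Fin M), (∑ j, a j (π j)) ≤ c) : uperm M a ≤ c :=
  Finset.sup'_le _ _ (fun π _ => h π)

noncomputable def Vt (m : ℕ) (t : ℝ) (x r : Fin m → ℝ) : ℝ :=
  uperm m (fun j mm => |x j + (t + (mm : ℕ)) * r j|)

lemma Vt_succ (m : ℕ) (t : ℝ) (x r : Fin m → ℝ) :
    Vt m t (fun j => x j + r j) r = Vt m (t+1) x r := by
  unfold Vt
  congr 1
  funext j mm
  congr 1
  ring

lemma Vt_pred (m : ℕ) (t : ℝ) (x r : Fin m → ℝ) :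
    Vt m t (fun j => x j - r j) r = Vt m (t-1) x r := by
  have h := Vt_succ m (t-1) (fun j => x j - r j) r
  simp only [sub_add_cancel] at h
  exact h.symm

lemma uperm_succ (m : ℕ) (A : Fin (m+1) → Fin (m+1) → ℝ) :
    uperm (m+1) A = Finset.univ.sup' Finset.univ_nonempty
      (fun e : Fin (m+1) => A (Fin.last m) e +
        uperm m (fun j mm => A j.castSucc (e.succAbove mm))) := by
  apply le_antisymm
  · apply uperm_le
    intro π
    set e := π (Fin.last m) with he
    have hne : ∀ j : Fin m, π j.castSucc ≠ e := by
      intro j hj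
      exact absurd (π.injective hj) (Fin.castSucc_lt_last j).ne
    have hex : ∀ j : Fin m, ∃ z : Fin m, e.succAbove z = π j.castSucc :=
      fun j => Fin.exists_succAbove_eq (hne j)
    choose σ0 hσ0 using hex
    have hinj : Function.Injective σ0 := by
      intro j k hjk
      have : π j.castSucc = π k.castSucc := by rw [← hσ0 j, ← hσ0 k, hjk]
      exact Fin.castSucc_injective m (π.injective this)
    let σ : Equiv.Perm (Fin m) := Equiv.ofBijective σ0 (Finite.injective_iff_bijective.mp hinj)
    have hval : (∑ j, A j (π j)) =
        A (Fin.last m) e + ∑ j : Fin m, A j.castSucc (e.succAbove (σ j)) := by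
      rw [Fin.sum_univ_castSucc (fun j => A j (π j))]
      rw [add_comm]
      congr 1
      apply Finset.sum_congr rfl
      intro j _
      simp only [σ, Equiv.ofBijective_apply, hσ0]
    rw [hval]
    have h1 := le_uperm m (fun j mm => A j.castSucc (e.succAbove mm)) σ
    have h2 : A (Fin.last m) e + uperm m (fun j mm => A j.castSucc (e.succAbove mm)) ≤
        Finset.univ.sup' Finset.univ_nonempty
        (fun e : Fin (m+1) => A (Fin.last m) e +
          uperm m (fun j mm => A j.castSucc (e.succAbove mm))) := by
      exact Finset.le_sup'
        (fun e : Fin (m+1) => A (Fin.last m) e +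
          uperm m (fun j mm => A j.castSucc (e.succAbove mm)))
        (Finset.mem_univ e)
    linarith
  · apply Finset.sup'_le
    intro e _
    have key : ∀ σ : Equiv.Perm (Fin m),
        A (Fin.last m) e + ∑ j : Fin m, A j.castSucc (e.succAbove (σ j)) ≤ uperm (m+1) A := by
      intro σ
      set F : Fin (m+1) → Fin (m+1) := Fin.lastCases e (fun j => e.succAbove (σ j)) with hF
      have hFlast : F (Fin.last m) = e := by simp [hF]
      have hFcast : ∀ j : Fin m, F j.castSucc = e.succAbove (σ j) := by
        intro j; simp [hF]
      have hinj : Function.Injective F := by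
        intro i k hik
        induction i using Fin.lastCases with
        | last =>
          induction k using Fin.lastCases with
          | last => rfl
          | cast k =>
            rw [hFlast, hFcast] at hik
            exact absurd hik.symm (Fin.succAbove_ne e (σ k))
        | cast i =>
          induction k using Fin.lastCases with
          | last =>
            rw [hFlast, hFcast] at hik
            exact absurd hik (Fin.succAbove_ne e (σ i))
          | cast k =>
            rw [hFcast, hFcast] at hik
            have := σ.injective (Fin.succAbove_right_injective hik)
            rw [this]
      let π : Equiv.Perm (Fin (m+1)) := Equiv.ofBijective F (Finite.injective_iff_bijective.mp hinj)
      have hval : (∑ j, A j (π j)) =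
          A (Fin.last m) e + ∑ j : Fin m, A j.castSucc (e.succAbove (σ j)) := by
        have : ∀ j, π j = F j := fun j => rfl
        rw [Fin.sum_univ_castSucc (fun j => A j (π j))]
        rw [add_comm]
        congr 1
        · rw [this, hFlast]
        · apply Finset.sum_congr rfl
          intro j _
          rw [this, hFcast]
      rw [← hval]
      exact le_uperm (m+1) A π
    have h2 : uperm m (fun j mm => A j.castSucc (e.succAbove mm)) ≤
        uperm (m+1) A - A (Fin.last m) e := by
      apply uperm_le
      intro σ
      have := key σ
      linarith
    linarith

lemma abs_shift_up (u t s D r ρ : ℝ) (hD : D = 0 ∨ D = 1) (hr0 : 0 ≤ r) (hrρ : r ≤ ρ) :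
    |u + (t + (s + D)) * r| ≤ |u + (t + s) * r| + D * ρ := by
  rcases hD with h | h <;> subst h
  · simp
  · have h1 : u + (t + (s+1)) * r = (u + (t+s)*r) + r := by ring
    rw [h1]
    calc |(u + (t+s)*r) + r| ≤ |u + (t+s)*r| + |r| := abs_add_le _ _
      _ ≤ |u + (t+s)*r| + 1 * ρ := by rw [abs_of_nonneg hr0]; linarith

lemma abs_shift_down (u t s D r ρ : ℝ) (hD : D = 0 ∨ D = 1) (hr0 : 0 ≤ r) (hrρ : r ≤ ρ) :
    |u + (t + (s + 1 - D)) * r| ≤ |u + ((t+1) + s) * r| + D * ρ := by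
  rcases hD with h | h <;> subst h
  · have h1 : u + (t + (s + 1 - 0)) * r = u + ((t+1)+s) * r := by ring
    rw [h1]; simp
  · have h1 : u + (t + (s + 1 - 1)) * r = (u + ((t+1)+s)*r) + (-r) := by ring
    rw [h1]
    calc |(u + ((t+1)+s)*r) + (-r)| ≤ |u + ((t+1)+s)*r| + |(-r)| := abs_add_le _ _
      _ ≤ |u + ((t+1)+s)*r| + 1 * ρ := by rw [abs_neg, abs_of_nonneg hr0]; linarith

lemma minor_le_top (m : ℕ) (t : ℝ) (x r : Fin m → ℝ) (ρ : ℝ)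
    (hr0 : ∀ j, 0 ≤ r j) (hrρ : ∀ j, r j ≤ ρ) (e : Fin (m+1)) :
    uperm m (fun j mm => |x j + (t + (((e.succAbove mm : Fin (m+1)) : ℕ) : ℝ)) * r j|)
      ≤ Vt m t x r + ((m:ℝ) - ((e:ℕ):ℝ)) * ρ := by
  apply uperm_le
  intro σ
  set D : Fin m → ℝ := fun mm => (((e.succAbove mm : Fin (m+1)) : ℕ) : ℝ) - ((mm:ℕ):ℝ) with hDdef
  have hD01 : ∀ mm, D mm = 0 ∨ D mm = 1 := by
    intro mm
    rcases succAbove_val_cases m e mm with h | h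
    · left; simp [hDdef, h]
    · right; simp [hDdef, h]
  have hterm : ∀ j : Fin m,
      |x j + (t + (((e.succAbove (σ j) : Fin (m+1)) : ℕ) : ℝ)) * r j|
        ≤ |x j + (t + (((σ j : Fin m) : ℕ) : ℝ)) * r j| + D (σ j) * ρ := by
    intro j
    have hrw : (((e.succAbove (σ j) : Fin (m+1)) : ℕ) : ℝ) = ((σ j : ℕ):ℝ) + D (σ j) := by
      simp [hDdef]
    rw [hrw]
    exact abs_shift_up (x j) t _ _ _ _ (hD01 (σ j)) (hr0 j) (hrρ j)
  have hsum : ∑ j : Fin m, |x j + (t + (((e.succAbove (σ j) : Fin (m+1)) : ℕ) : ℝ)) * r j|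
      ≤ (∑ j : Fin m, |x j + (t + (((σ j : Fin m) : ℕ) : ℝ)) * r j|)
        + (∑ j : Fin m, D (σ j)) * ρ := by
    rw [Finset.sum_mul, ← Finset.sum_add_distrib]
    exact Finset.sum_le_sum (fun j _ => hterm j)
  have h1 := le_uperm m (fun j mm => |x j + (t + ((mm:ℕ):ℝ)) * r j|) σ
  have h2 : ∑ j : Fin m, D (σ j) = (m:ℝ) - ((e:ℕ):ℝ) := by
    rw [Equiv.sum_comp σ D]
    simp only [hDdef]
    rw [Finset.sum_sub_distrib, sum_succAbove_real m e]
    ring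
  rw [h2] at hsum
  exact le_trans hsum (by unfold Vt; linarith)

lemma minor_le_bot (m : ℕ) (t : ℝ) (x r : Fin m → ℝ) (ρ : ℝ)
    (hr0 : ∀ j, 0 ≤ r j) (hrρ : ∀ j, r j ≤ ρ) (e : Fin (m+1)) :
    uperm m (fun j mm => |x j + (t + (((e.succAbove mm : Fin (m+1)) : ℕ) : ℝ)) * r j|)
      ≤ Vt m (t+1) x r + ((e:ℕ):ℝ) * ρ := by
  apply uperm_le
  intro σ
  set D : Fin m → ℝ := fun mm => ((mm:ℕ):ℝ) + 1 - (((e.succAbove mm : Fin (m+1)) : ℕ) : ℝ) with hDdef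
  have hD01 : ∀ mm, D mm = 0 ∨ D mm = 1 := by
    intro mm
    rcases succAbove_val_cases m e mm with h | h
    · right; simp [hDdef, h]
    · left; simp [hDdef, h]
  have hterm : ∀ j : Fin m,
      |x j + (t + (((e.succAbove (σ j) : Fin (m+1)) : ℕ) : ℝ)) * r j|
        ≤ |x j + ((t+1) + (((σ j : Fin m) : ℕ) : ℝ)) * r j| + D (σ j) * ρ := by
    intro j
    have hrw : (((e.succAbove (σ j) : Fin (m+1)) : ℕ) : ℝ) = ((σ j : ℕ):ℝ) + 1 - D (σ j) := by
      simp [hDdef]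
    rw [hrw]
    exact abs_shift_down (x j) t _ _ _ _ (hD01 (σ j)) (hr0 j) (hrρ j)
  have hsum : ∑ j : Fin m, |x j + (t + (((e.succAbove (σ j) : Fin (m+1)) : ℕ) : ℝ)) * r j|
      ≤ (∑ j : Fin m, |x j + ((t+1) + (((σ j : Fin m) : ℕ) : ℝ)) * r j|)
        + (∑ j : Fin m, D (σ j)) * ρ := by
    rw [Finset.sum_mul, ← Finset.sum_add_distrib]
    exact Finset.sum_le_sum (fun j _ => hterm j)
  have h1 := le_uperm m (fun j mm => |x j + ((t+1) + ((mm:ℕ):ℝ)) * r j|) σ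
  have h2 : ∑ j : Fin m, D (σ j) = ((e:ℕ):ℝ) := by
    rw [Equiv.sum_comp σ D]
    simp only [hDdef]
    rw [Finset.sum_sub_distrib, sum_succAbove_real m e, Finset.sum_add_distrib]
    simp [Finset.card_univ]
  rw [h2] at hsum
  exact le_trans hsum (by unfold Vt; linarith)

lemma minor_eq_top (m : ℕ) (t : ℝ) (x r : Fin m → ℝ) :
    uperm m (fun j mm => |x j + (t + ((((Fin.last m).succAbove mm : Fin (m+1)) : ℕ) : ℝ)) * r j|)
      = Vt m t x r := by
  unfold Vt
  congr 1
  funext j mm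
  rw [Fin.succAbove_last, Fin.coe_castSucc]

lemma minor_eq_bot (m : ℕ) (t : ℝ) (x r : Fin m → ℝ) :
    uperm m (fun j mm => |x j + (t + ((((0 : Fin (m+1)).succAbove mm : Fin (m+1)) : ℕ) : ℝ)) * r j|)
      = Vt m (t+1) x r := by
  unfold Vt
  congr 1
  funext j mm
  congr 1
  have : (((0 : Fin (m+1)).succAbove mm : Fin (m+1)) : ℕ) = (mm : ℕ) + 1 := by
    cases m with
    | zero => exact absurd mm.2 (by omega)
    | succ m' => rw [Fin.succAbove_zero, Fin.val_succ]
  rw [this]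
  push_cast
  ring

/-- Two-branch decomposition of `Vt` along the last row. -/
lemma Vt_split (m : ℕ) (t : ℝ) (y r : Fin (m+1) → ℝ)
    (hr0 : ∀ j, 0 ≤ r j) (hmono : ∀ j, r j ≤ r (Fin.last m)) :
    Vt (m+1) t y r =
      max (y (Fin.last m) + (t + (m:ℝ)) * r (Fin.last m)
             + Vt m t (fun j => y j.castSucc) (fun j => r j.castSucc))
          (-(y (Fin.last m) + t * r (Fin.last m))
             + Vt m (t+1) (fun j => y j.castSucc) (fun j => r j.castSucc)) := by
  have hrcs0 : ∀ j : Fin m, 0 ≤ (fun j : Fin m => r j.castSucc) j := fun j => hr0 _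
  have hrcsρ : ∀ j : Fin m, (fun j : Fin m => r j.castSucc) j ≤ r (Fin.last m) := fun j => hmono _
  rw [show Vt (m+1) t y r = uperm (m+1) (fun j mm => |y j + (t + ((mm:ℕ):ℝ)) * r j|) from rfl]
  rw [uperm_succ]
  apply le_antisymm
  · apply Finset.sup'_le
    intro e _
    have htop := minor_le_top m t (fun j => y j.castSucc) (fun j => r j.castSucc)
      (r (Fin.last m)) hrcs0 hrcsρ e
    have hbot := minor_le_bot m t (fun j => y j.castSucc) (fun j => r j.castSucc)
      (r (Fin.last m)) hrcs0 hrcsρ e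
    have habs : |y (Fin.last m) + (t + ((e:ℕ):ℝ)) * r (Fin.last m)|
        = max (y (Fin.last m) + (t + ((e:ℕ):ℝ)) * r (Fin.last m))
              (-(y (Fin.last m) + (t + ((e:ℕ):ℝ)) * r (Fin.last m))) := abs_eq_max_neg ..
    rw [habs, ← max_add_add_right]
    apply max_le
    · have hring : y (Fin.last m) + (t + ((e:ℕ):ℝ)) * r (Fin.last m)
          + (Vt m t (fun j => y j.castSucc) (fun j => r j.castSucc)
             + ((m:ℝ) - ((e:ℕ):ℝ)) * r (Fin.last m))
          = y (Fin.last m) + (t + (m:ℝ)) * r (Fin.last m)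
            + Vt m t (fun j => y j.castSucc) (fun j => r j.castSucc) := by ring
      refine le_trans (le_trans (add_le_add_right htop _) (le_of_eq hring)) (le_max_left _ _)
    · have hring : -(y (Fin.last m) + (t + ((e:ℕ):ℝ)) * r (Fin.last m))
          + (Vt m (t+1) (fun j => y j.castSucc) (fun j => r j.castSucc)
             + ((e:ℕ):ℝ) * r (Fin.last m))
          = -(y (Fin.last m) + t * r (Fin.last m))
            + Vt m (t+1) (fun j => y j.castSucc) (fun j => r j.castSucc) := by ring
      refine le_trans (le_trans (add_le_add_right hbot _) (le_of_eq hring)) (le_max_right _ _)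
  · apply max_le
    · have heq := minor_eq_top m t (fun j => y j.castSucc) (fun j => r j.castSucc)
      have hle : y (Fin.last m) + (t + (m:ℝ)) * r (Fin.last m)
            + Vt m t (fun j => y j.castSucc) (fun j => r j.castSucc)
          ≤ |y (Fin.last m) + (t + (((Fin.last m : Fin (m+1)):ℕ):ℝ)) * r (Fin.last m)|
            + uperm m (fun j mm =>
                |y j.castSucc + (t + ((((Fin.last m).succAbove mm : Fin (m+1)):ℕ):ℝ)) * r j.castSucc|) := by
        rw [heq, Fin.val_last]
        exact add_le_add_left (le_abs_self _) _
      refine le_trans hle ?_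
      exact Finset.le_sup' (fun e : Fin (m+1) => |y (Fin.last m) + (t + ((e:ℕ):ℝ)) * r (Fin.last m)|
          + uperm m (fun j mm => |y j.castSucc + (t + (((e.succAbove mm : Fin (m+1)):ℕ):ℝ)) * r j.castSucc|))
        (Finset.mem_univ (Fin.last m))
    · have heq := minor_eq_bot m t (fun j => y j.castSucc) (fun j => r j.castSucc)
      have hle : -(y (Fin.last m) + t * r (Fin.last m))
            + Vt m (t+1) (fun j => y j.castSucc) (fun j => r j.castSucc)
          ≤ |y (Fin.last m) + (t + (((0 : Fin (m+1)):ℕ):ℝ)) * r (Fin.last m)|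
            + uperm m (fun j mm =>
                |y j.castSucc + (t + ((((0 : Fin (m+1)).succAbove mm : Fin (m+1)):ℕ):ℝ)) * r j.castSucc|) := by
        rw [heq]
        have : (((0 : Fin (m+1)):ℕ):ℝ) = 0 := by norm_num
        rw [this, add_zero]
        exact add_le_add_left (neg_le_abs _) _
      refine le_trans hle ?_
      exact Finset.le_sup' (fun e : Fin (m+1) => |y (Fin.last m) + (t + ((e:ℕ):ℝ)) * r (Fin.last m)|
          + uperm m (fun j mm => |y j.castSucc + (t + (((e.succAbove mm : Fin (m+1)):ℕ):ℝ)) * r j.castSucc|))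
        (Finset.mem_univ (0 : Fin (m+1)))


lemma Vt_one (t : ℝ) (x r : Fin 1 → ℝ) : Vt 1 t x r = |x 0 + t * r 0| := by
  apply le_antisymm
  · apply uperm_le
    intro π
    rw [Fin.sum_univ_one]
    have h0 : π 0 = 0 := Subsingleton.elim _ _
    rw [h0]
    norm_num
  · show |x 0 + t * r 0| ≤ uperm 1 fun j mm => |x j + (t + ((mm:ℕ):ℝ)) * r j|
    have h := le_uperm 1 (fun j mm => |x j + (t + ((mm:ℕ):ℝ)) * r j|) 1
    rw [Fin.sum_univ_one] at h
    refine le_trans (le_of_eq ?_) h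
    norm_num

lemma C1 : ∀ (m : ℕ) (t : ℝ) (x a b : Fin (m+1) → ℝ),
    (∀ j, 0 ≤ a j) → (∀ j, 0 ≤ b j) → Monotone a → Monotone b →
    Vt (m+1) t (fun j => x j + b j) (fun j => a j + b j)
      + Vt (m+1) (t-1) x (fun j => a j + b j)
    ≤ Vt (m+1) t x (fun j => a j + b j)
      + Vt (m+1) (t-1) (fun j => x j + b j) (fun j => a j + b j) + 2 * b (Fin.last m) := by
  intro m
  induction m with
  | zero =>
    intro t x a b ha0 hb0 _ _
    rw [Vt_one, Vt_one, Vt_one, Vt_one]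
    have h1 : |x 0 + b 0 + t * (a 0 + b 0)| ≤ |x 0 + t * (a 0 + b 0)| + b 0 := by
      have := abs_add_le (x 0 + t * (a 0 + b 0)) (b 0)
      rw [abs_of_nonneg (hb0 0)] at this
      calc |x 0 + b 0 + t * (a 0 + b 0)| = |x 0 + t * (a 0 + b 0) + b 0| := by ring_nf
        _ ≤ _ := this
    have h2 : |x 0 + (t-1) * (a 0 + b 0)| ≤ |x 0 + b 0 + (t-1) * (a 0 + b 0)| + b 0 := by
      have := abs_add_le (x 0 + b 0 + (t-1) * (a 0 + b 0)) (-(b 0))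
      rw [abs_neg, abs_of_nonneg (hb0 0)] at this
      calc |x 0 + (t-1) * (a 0 + b 0)| = |x 0 + b 0 + (t-1) * (a 0 + b 0) + -(b 0)| := by ring_nf
        _ ≤ _ := this
    have hlast : (Fin.last 0) = (0 : Fin 1) := rfl
    rw [hlast]
    linarith
  | succ m ih =>
    intro t x a b ha0 hb0 hamono hbmono
    have hr0 : ∀ j : Fin (m+2), 0 ≤ (fun j => a j + b j) j := fun j => by
      have := ha0 j; have := hb0 j; simp only []; linarith
    have hrmono : ∀ j : Fin (m+2),
        (fun j => a j + b j) j ≤ (fun j => a j + b j) (Fin.last (m+1)) := fun j => by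
      have h1 := hamono (Fin.le_last j); have h2 := hbmono (Fin.le_last j)
      simp only []; exact add_le_add h1 h2
    rw [Vt_split (m+1) t (fun j => x j + b j) (fun j => a j + b j) hr0 hrmono]
    rw [Vt_split (m+1) (t-1) x (fun j => a j + b j) hr0 hrmono]
    rw [Vt_split (m+1) t x (fun j => a j + b j) hr0 hrmono]
    rw [Vt_split (m+1) (t-1) (fun j => x j + b j) (fun j => a j + b j) hr0 hrmono]
    have ht : t - 1 + 1 = t := by ring
    rw [ht]
    -- truncated vectors and hypotheses
    have hac0 : ∀ j : Fin (m+1), 0 ≤ a j.castSucc := fun j => ha0 _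
    have hbc0 : ∀ j : Fin (m+1), 0 ≤ b j.castSucc := fun j => hb0 _
    have hacmono : Monotone (fun j : Fin (m+1) => a j.castSucc) := by
      intro j k hjk
      exact hamono (Fin.castSucc_le_castSucc_iff.mpr hjk)
    have hbcmono : Monotone (fun j : Fin (m+1) => b j.castSucc) := by
      intro j k hjk
      exact hbmono (Fin.castSucc_le_castSucc_iff.mpr hjk)
    have ih1 := ih t (fun j => x j.castSucc) (fun j => a j.castSucc) (fun j => b j.castSucc)
      hac0 hbc0 hacmono hbcmono
    have ih2 := ih (t+1) (fun j => x j.castSucc) (fun j => a j.castSucc) (fun j => b j.castSucc)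
      hac0 hbc0 hacmono hbcmono
    have ht2 : t + 1 - 1 = t := by ring
    rw [ht2] at ih2
    -- C2 instance: swap roles (a,b) at base point x+b
    have ih3 := ih t (fun j => x j.castSucc + b j.castSucc)
      (fun j => b j.castSucc) (fun j => a j.castSucc) hbc0 hac0 hbcmono hacmono
    have hcomm : (fun j : Fin (m+1) => b j.castSucc + a j.castSucc)
        = (fun j : Fin (m+1) => a j.castSucc + b j.castSucc) := funext fun j => add_comm _ _
    rw [hcomm] at ih3
    have hxr : (fun j : Fin (m+1) => x j.castSucc + b j.castSucc + a j.castSucc)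
        = (fun j : Fin (m+1) => x j.castSucc + (a j.castSucc + b j.castSucc)) :=
      funext fun j => by ring
    rw [hxr] at ih3
    rw [Vt_succ (m+1) t (fun j => x j.castSucc) (fun j => a j.castSucc + b j.castSucc)] at ih3
    rw [Vt_succ (m+1) (t-1) (fun j => x j.castSucc) (fun j => a j.castSucc + b j.castSucc)] at ih3
    rw [ht] at ih3
    -- ring facts for the scalar products
    have f1 : (t + ((m+1 : ℕ):ℝ)) * (a (Fin.last (m+1)) + b (Fin.last (m+1)))
        = t * (a (Fin.last (m+1)) + b (Fin.last (m+1)))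
          + ((m+1 : ℕ):ℝ) * (a (Fin.last (m+1)) + b (Fin.last (m+1))) := by ring
    have f2 : (t - 1 + ((m+1 : ℕ):ℝ)) * (a (Fin.last (m+1)) + b (Fin.last (m+1)))
        = t * (a (Fin.last (m+1)) + b (Fin.last (m+1)))
          + ((m+1 : ℕ):ℝ) * (a (Fin.last (m+1)) + b (Fin.last (m+1)))
          - (a (Fin.last (m+1)) + b (Fin.last (m+1))) := by ring
    have f3 : (t - 1) * (a (Fin.last (m+1)) + b (Fin.last (m+1)))
        = t * (a (Fin.last (m+1)) + b (Fin.last (m+1)))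
          - (a (Fin.last (m+1)) + b (Fin.last (m+1))) := by ring
    -- monotone top bounds
    have hma : a (Fin.last m).castSucc ≤ a (Fin.last (m+1)) := hamono (Fin.le_last _)
    have hmb : b (Fin.last m).castSucc ≤ b (Fin.last (m+1)) := hbmono (Fin.le_last _)
    have haL := ha0 (Fin.last (m+1))
    have hbL := hb0 (Fin.last (m+1))
    rcases max_cases
      (x (Fin.last (m+1)) + b (Fin.last (m+1))
        + (t + ((m+1 : ℕ):ℝ)) * (a (Fin.last (m+1)) + b (Fin.last (m+1)))
        + Vt (m+1) t (fun j => x j.castSucc + b j.castSucc) (fun j => a j.castSucc + b j.castSucc))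
      (-(x (Fin.last (m+1)) + b (Fin.last (m+1))
          + t * (a (Fin.last (m+1)) + b (Fin.last (m+1))))
        + Vt (m+1) (t+1) (fun j => x j.castSucc + b j.castSucc) (fun j => a j.castSucc + b j.castSucc))
      with ⟨hA, _⟩ | ⟨hA, _⟩ <;>
    rcases max_cases
      (x (Fin.last (m+1))
        + (t - 1 + ((m+1 : ℕ):ℝ)) * (a (Fin.last (m+1)) + b (Fin.last (m+1)))
        + Vt (m+1) (t-1) (fun j => x j.castSucc) (fun j => a j.castSucc + b j.castSucc))
      (-(x (Fin.last (m+1)) + (t - 1) * (a (Fin.last (m+1)) + b (Fin.last (m+1))))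
        + Vt (m+1) t (fun j => x j.castSucc) (fun j => a j.castSucc + b j.castSucc))
      with ⟨hB, _⟩ | ⟨hB, _⟩ <;>
    rw [hA, hB] <;>
    [skip; skip; skip; skip] <;>
    have hC1 := le_max_left
      (x (Fin.last (m+1))
        + (t + ((m+1 : ℕ):ℝ)) * (a (Fin.last (m+1)) + b (Fin.last (m+1)))
        + Vt (m+1) t (fun j => x j.castSucc) (fun j => a j.castSucc + b j.castSucc))
      (-(x (Fin.last (m+1)) + t * (a (Fin.last (m+1)) + b (Fin.last (m+1))))
        + Vt (m+1) (t+1) (fun j => x j.castSucc) (fun j => a j.castSucc + b j.castSucc)) <;>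
    have hC2 := le_max_right
      (x (Fin.last (m+1))
        + (t + ((m+1 : ℕ):ℝ)) * (a (Fin.last (m+1)) + b (Fin.last (m+1)))
        + Vt (m+1) t (fun j => x j.castSucc) (fun j => a j.castSucc + b j.castSucc))
      (-(x (Fin.last (m+1)) + t * (a (Fin.last (m+1)) + b (Fin.last (m+1))))
        + Vt (m+1) (t+1) (fun j => x j.castSucc) (fun j => a j.castSucc + b j.castSucc)) <;>
    have hD1 := le_max_left
      (x (Fin.last (m+1)) + b (Fin.last (m+1))
        + (t - 1 + ((m+1 : ℕ):ℝ)) * (a (Fin.last (m+1)) + b (Fin.last (m+1)))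
        + Vt (m+1) (t-1) (fun j => x j.castSucc + b j.castSucc) (fun j => a j.castSucc + b j.castSucc))
      (-(x (Fin.last (m+1)) + b (Fin.last (m+1))
          + (t - 1) * (a (Fin.last (m+1)) + b (Fin.last (m+1))))
        + Vt (m+1) t (fun j => x j.castSucc + b j.castSucc) (fun j => a j.castSucc + b j.castSucc)) <;>
    have hD2 := le_max_right
      (x (Fin.last (m+1)) + b (Fin.last (m+1))
        + (t - 1 + ((m+1 : ℕ):ℝ)) * (a (Fin.last (m+1)) + b (Fin.last (m+1)))
        + Vt (m+1) (t-1) (fun j => x j.castSucc + b j.castSucc) (fun j => a j.castSucc + b j.castSucc))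
      (-(x (Fin.last (m+1)) + b (Fin.last (m+1))
          + (t - 1) * (a (Fin.last (m+1)) + b (Fin.last (m+1))))
        + Vt (m+1) t (fun j => x j.castSucc + b j.castSucc) (fun j => a j.castSucc + b j.castSucc)) <;>
    linarith

lemma final_max (pF qF sF vF uF PP RL X1 X2 A B : ℝ)
    (hrAB : RL = A + B)
    (h1 : qF + vF ≤ pF + sF + 2*B) (h2 : uF + sF ≤ pF + qF + 2*A) :
    pF + max (PP + B + X1 + sF) (-(PP + B + X2) + qF)
      = max (qF + max (PP + X1 + vF) (-(PP + X2) + pF) - B)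
            (sF + max (PP + RL + X1 + pF) (-(PP + RL + X2) + uF) - A) := by
  apply le_antisymm
  · rcases max_cases (PP + B + X1 + sF) (-(PP + B + X2) + qF) with ⟨h,_⟩|⟨h,_⟩ <;> rw [h]
    · linarith [le_max_right
          (qF + max (PP + X1 + vF) (-(PP + X2) + pF) - B)
          (sF + max (PP + RL + X1 + pF) (-(PP + RL + X2) + uF) - A),
        le_max_left (PP + RL + X1 + pF) (-(PP + RL + X2) + uF)]
    · linarith [le_max_left
          (qF + max (PP + X1 + vF) (-(PP + X2) + pF) - B)
          (sF + max (PP + RL + X1 + pF) (-(PP + RL + X2) + uF) - A),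
        le_max_right (PP + X1 + vF) (-(PP + X2) + pF)]
  · apply max_le
    · rcases max_cases (PP + X1 + vF) (-(PP + X2) + pF) with ⟨h,_⟩|⟨h,_⟩ <;> rw [h] <;>
      linarith [le_max_left (PP + B + X1 + sF) (-(PP + B + X2) + qF),
        le_max_right (PP + B + X1 + sF) (-(PP + B + X2) + qF)]
    · rcases max_cases (PP + RL + X1 + pF) (-(PP + RL + X2) + uF) with ⟨h,_⟩|⟨h,_⟩ <;> rw [h] <;>
      linarith [le_max_left (PP + B + X1 + sF) (-(PP + B + X2) + qF),
        le_max_right (PP + B + X1 + sF) (-(PP + B + X2) + qF)]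

theorem backlund_typeII (N : ℕ) (hN : 1 ≤ N) (p q c : Fin (N + 1) → ℝ)
    (hp0 : ∀ j, 0 ≤ p j) (hpmono : Monotone p)
    (hq0 : ∀ j, 0 ≤ q j) (hqmono : Monotone q)
    (hpq0 : ∀ j, 0 ≤ p j - q j) (hpqmono : Monotone fun j => p j - q j)
    (k l : ℝ) (hk : 0 ≤ k) (hl : 0 ≤ l)
    (r : Fin (N + 1) → ℝ) (hr : ∀ j, r j = k * p j + l * q j)
    (f g : ℝ → ℝ → ℝ)
    (hf : ∀ n i : ℝ, f n i = uperm N fun j m =>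
      |(p j.castSucc * n - q j.castSucc * i + c j.castSucc) +
        (2 * ((m : ℕ) : ℝ) - (N : ℝ) + 1) * r j.castSucc / 2|)
    (hg : ∀ n i : ℝ, g n i = uperm (N + 1) fun j m =>
      |(p j * n - q j * i + c j) + (2 * ((m : ℕ) : ℝ) - (N : ℝ) - 1) * r j / 2|)
    (α β A B : ℝ) (hα0 : 0 ≤ α) (hαk : α ≤ k)
    (hβ1 : -k - l + α ≤ β) (hβ2 : β ≤ α)
    (hA : A = (k - α) * p (Fin.last N) + (l + β) * q (Fin.last N))
    (hB : B = α * p (Fin.last N) - β * q (Fin.last N)) :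
    ∀ n i : ℝ,
      f n i + g (n + α) (i + β) =
        max (f (n + α) (i + β) + g n i - B)
            (f (n - k + α) (i + l + β) + g (n + k) (i - l) - A) := by
  intro n i
  obtain ⟨N', rfl⟩ : ∃ N', N = N' + 1 := ⟨N - 1, by omega⟩
  set tF : ℝ := (1 - ((N' + 1 : ℕ) : ℝ)) / 2 with htF
  -- basic positivity / monotonicity facts
  have hr0F : ∀ j : Fin (N'+2), 0 ≤ r j := fun j => by
    rw [hr]
    have h1 : 0 ≤ k * p j := mul_nonneg hk (hp0 j)
    have h2 : 0 ≤ l * q j := mul_nonneg hl (hq0 j)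
    linarith
  have hrmonoF : ∀ j : Fin (N'+2), r j ≤ r (Fin.last (N'+1)) := fun j => by
    rw [hr, hr]
    have h1 := mul_le_mul_of_nonneg_left (hpmono (Fin.le_last j)) hk
    have h2 := mul_le_mul_of_nonneg_left (hqmono (Fin.le_last j)) hl
    linarith
  have hbv0 : ∀ j : Fin (N'+2), 0 ≤ α * p j - β * q j := fun j => by
    rcases le_or_gt β 0 with hβ | hβ
    · have h1 : 0 ≤ α * p j := mul_nonneg hα0 (hp0 j)
      have h2 : 0 ≤ (-β) * q j := mul_nonneg (by linarith) (hq0 j)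
      linarith
    · have h1 : 0 ≤ β * (p j - q j) := mul_nonneg (le_of_lt hβ) (hpq0 j)
      have h2 : 0 ≤ (α - β) * p j := mul_nonneg (by linarith) (hp0 j)
      nlinarith
  have hbvmono : Monotone (fun j : Fin (N'+2) => α * p j - β * q j) := by
    intro j j' hjj'
    rcases le_or_gt β 0 with hβ | hβ
    · have h1 := mul_le_mul_of_nonneg_left (hpmono hjj') hα0
      have h2 := mul_le_mul_of_nonneg_left (hqmono hjj') (by linarith : (0:ℝ) ≤ -β)
      simp only []
      nlinarith
    · have h1 := mul_le_mul_of_nonneg_left (hpqmono hjj') (le_of_lt hβ)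
      have h2 := mul_le_mul_of_nonneg_left (hpmono hjj') (by linarith : (0:ℝ) ≤ α - β)
      simp only [] at h1 ⊢
      nlinarith
  have hav0 : ∀ j : Fin (N'+2), 0 ≤ (k - α) * p j + (l + β) * q j := fun j => by
    rcases le_or_gt 0 (l + β) with hlβ | hlβ
    · have h1 : 0 ≤ (k - α) * p j := mul_nonneg (by linarith) (hp0 j)
      have h2 : 0 ≤ (l + β) * q j := mul_nonneg hlβ (hq0 j)
      linarith
    · have h1 : 0 ≤ (k - α) * (p j - q j) := mul_nonneg (by linarith) (hpq0 j)
      have h2 : 0 ≤ (k - α + l + β) * q j := mul_nonneg (by linarith) (hq0 j)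
      nlinarith
  have havmono : Monotone (fun j : Fin (N'+2) => (k - α) * p j + (l + β) * q j) := by
    intro j j' hjj'
    rcases le_or_gt 0 (l + β) with hlβ | hlβ
    · have h1 := mul_le_mul_of_nonneg_left (hpmono hjj') (by linarith : (0:ℝ) ≤ k - α)
      have h2 := mul_le_mul_of_nonneg_left (hqmono hjj') hlβ
      simp only []
      nlinarith
    · have h1 := mul_le_mul_of_nonneg_left (hpqmono hjj') (by linarith : (0:ℝ) ≤ -(l + β))
      have h2 := mul_le_mul_of_nonneg_left (hpmono hjj') (by linarith : (0:ℝ) ≤ k - α + l + β)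
      simp only [] at h1 ⊢
      nlinarith
  -- Vt forms of f and g
  have hfV : ∀ n' i' : ℝ, f n' i' = Vt (N'+1) tF
      (fun j : Fin (N'+1) => p j.castSucc * n' - q j.castSucc * i' + c j.castSucc)
      (fun j : Fin (N'+1) => r j.castSucc) := by
    intro n' i'
    rw [hf]
    unfold Vt
    congr 1
    funext j mm
    congr 1
    rw [htF]
    push_cast
    ring
  have hgV : ∀ n' i' : ℝ, g n' i' = Vt (N'+2) (tF - 1)
      (fun j : Fin (N'+2) => p j * n' - q j * i' + c j)
      (fun j : Fin (N'+2) => r j) := by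
    intro n' i'
    rw [hg]
    unfold Vt
    congr 1
    funext j mm
    congr 1
    rw [htF]
    push_cast
    ring
  rw [hfV n i, hfV (n+α) (i+β), hfV (n-k+α) (i+l+β),
    hgV (n+α) (i+β), hgV n i, hgV (n+k) (i-l)]
  -- vector normalizations
  have hv1 : (fun j : Fin (N'+1) => p j.castSucc * (n+α) - q j.castSucc * (i+β) + c j.castSucc)
      = (fun j : Fin (N'+1) => (p j.castSucc * n - q j.castSucc * i + c j.castSucc)
          + (α * p j.castSucc - β * q j.castSucc)) := funext fun j => by ring
  have hv2 : (fun j : Fin (N'+1) => p j.castSucc * (n-k+α) - q j.castSucc * (i+l+β) + c j.castSucc)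
      = (fun j : Fin (N'+1) => ((p j.castSucc * n - q j.castSucc * i + c j.castSucc)
          + (α * p j.castSucc - β * q j.castSucc)) - r j.castSucc) := funext fun j => by
    rw [hr]; ring
  have hv3 : (fun j : Fin (N'+2) => p j * (n+α) - q j * (i+β) + c j)
      = (fun j : Fin (N'+2) => (p j * n - q j * i + c j) + (α * p j - β * q j)) :=
    funext fun j => by ring
  have hv4 : (fun j : Fin (N'+2) => p j * (n+k) - q j * (i-l) + c j)
      = (fun j : Fin (N'+2) => (p j * n - q j * i + c j) + r j) := funext fun j => by
    rw [hr]; ring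
  rw [hv1, hv2, hv3, hv4]
  -- f (n-k+α) (i+l+β) : translate down
  have hsp := Vt_pred (N'+1) tF
    (fun j : Fin (N'+1) => (p j.castSucc * n - q j.castSucc * i + c j.castSucc)
        + (α * p j.castSucc - β * q j.castSucc))
    (fun j : Fin (N'+1) => r j.castSucc)
  rw [hsp]
  rw [Vt_split (N'+1) (tF-1)
      (fun j : Fin (N'+2) => p j * n - q j * i + c j + (α * p j - β * q j))
      (fun j : Fin (N'+2) => r j) hr0F hrmonoF,
    Vt_split (N'+1) (tF-1) (fun j : Fin (N'+2) => p j * n - q j * i + c j)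
      (fun j : Fin (N'+2) => r j) hr0F hrmonoF,
    Vt_split (N'+1) (tF-1) (fun j : Fin (N'+2) => p j * n - q j * i + c j + r j)
      (fun j : Fin (N'+2) => r j) hr0F hrmonoF]
  have htt : tF - 1 + 1 = tF := by ring
  rw [htt]
  -- translations for the g (n+k) (i-l) inner pieces
  have hsu1 := Vt_succ (N'+1) (tF - 1)
    (fun j : Fin (N'+1) => p j.castSucc * n - q j.castSucc * i + c j.castSucc)
    (fun j : Fin (N'+1) => r j.castSucc)
  rw [htt] at hsu1
  have hsu2 := Vt_succ (N'+1) tF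
    (fun j : Fin (N'+1) => p j.castSucc * n - q j.castSucc * i + c j.castSucc)
    (fun j : Fin (N'+1) => r j.castSucc)
  rw [hsu1, hsu2]
  -- C1 and C2 instances
  have hac0t : ∀ j : Fin (N'+1), 0 ≤ (k - α) * p j.castSucc + (l + β) * q j.castSucc :=
    fun j => hav0 _
  have hbc0t : ∀ j : Fin (N'+1), 0 ≤ α * p j.castSucc - β * q j.castSucc :=
    fun j => hbv0 _
  have hacmt : Monotone (fun j : Fin (N'+1) => (k - α) * p j.castSucc + (l + β) * q j.castSucc) :=
    fun j j' hjj' => havmono (Fin.castSucc_le_castSucc_iff.mpr hjj')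
  have hbcmt : Monotone (fun j : Fin (N'+1) => α * p j.castSucc - β * q j.castSucc) :=
    fun j j' hjj' => hbvmono (Fin.castSucc_le_castSucc_iff.mpr hjj')
  have hrcomb : (fun j : Fin (N'+1) =>
      (k - α) * p j.castSucc + (l + β) * q j.castSucc + (α * p j.castSucc - β * q j.castSucc))
      = (fun j : Fin (N'+1) => r j.castSucc) := funext fun j => by rw [hr]; ring
  have hC1i := C1 N' tF
    (fun j : Fin (N'+1) => p j.castSucc * n - q j.castSucc * i + c j.castSucc)
    (fun j : Fin (N'+1) => (k - α) * p j.castSucc + (l + β) * q j.castSucc)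
    (fun j : Fin (N'+1) => α * p j.castSucc - β * q j.castSucc)
    hac0t hbc0t hacmt hbcmt
  rw [hrcomb] at hC1i
  have hbcleB : α * p (Fin.last N').castSucc - β * q (Fin.last N').castSucc ≤ B := by
    have := hbvmono (Fin.le_last ((Fin.last N').castSucc))
    rw [hB]
    exact this
  -- C2
  have hrcomb2 : (fun j : Fin (N'+1) =>
      α * p j.castSucc - β * q j.castSucc + ((k - α) * p j.castSucc + (l + β) * q j.castSucc))
      = (fun j : Fin (N'+1) => r j.castSucc) := funext fun j => by rw [hr]; ring
  have hxcr : (fun j : Fin (N'+1) =>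
      p j.castSucc * n - q j.castSucc * i + c j.castSucc + (α * p j.castSucc - β * q j.castSucc)
        + ((k - α) * p j.castSucc + (l + β) * q j.castSucc))
      = (fun j : Fin (N'+1) =>
          p j.castSucc * n - q j.castSucc * i + c j.castSucc + r j.castSucc) :=
    funext fun j => by rw [hr]; ring
  have hC2i := C1 N' tF
    (fun j : Fin (N'+1) => p j.castSucc * n - q j.castSucc * i + c j.castSucc
      + (α * p j.castSucc - β * q j.castSucc))
    (fun j : Fin (N'+1) => α * p j.castSucc - β * q j.castSucc)
    (fun j : Fin (N'+1) => (k - α) * p j.castSucc + (l + β) * q j.castSucc)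
    hbc0t hac0t hbcmt hacmt
  rw [hrcomb2, hxcr, hsu1, hsu2] at hC2i
  have hacleA : (k - α) * p (Fin.last N').castSucc + (l + β) * q (Fin.last N').castSucc ≤ A := by
    have := havmono (Fin.le_last ((Fin.last N').castSucc))
    rw [hA]
    exact this
  have hrAB : r (Fin.last (N'+1)) = A + B := by rw [hr, hA, hB]; ring
  -- rewrite the explicit b-scalar into B
  rw [show α * p (Fin.last (N'+1)) - β * q (Fin.last (N'+1)) = B from by rw [hB]]
  exact final_max _ _ _ _ _ _ _ _ _ A B hrAB (by linarith) (by linarith)
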